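/- Let X be a real Hilbert space, let ρ ≥ −1/2, and let A : X ⇉ X be maximally ρ-comonotone. Then the zero set zer A = {x ∈ X : 0 ∈ A x} is closed and convex. -/
import Mathlib


open RealInnerProductSpace

variable {X : Type*} [NormedAddCommGroup X] [InnerProductSpace ℝ X] [CompleteSpace X]

/-- `A` is `ρ`-comonotone. -/
def Comonotone (ρ : ℝ) (A : X → Set X) : Prop :=
  ∀ ⦃x u y v : X⦄, u ∈ A x → v ∈ A y → ρ * ‖u - v‖ ^ 2 ≤ ⟪x - y, u - v⟫

/-- `A` is maximally `ρ`-comonotone. -/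
def MaxComonotone (ρ : ℝ) (A : X → Set X) : Prop :=
  Comonotone ρ A ∧ ∀ B : X → Set X, Comonotone ρ B → (∀ x, A x ⊆ B x) → ∀ x, B x ⊆ A x

theorem stmt14 (A : X → Set X) (ρ : ℝ) (hρ : -(1 / 2) ≤ ρ) (hA : MaxComonotone ρ A) :
    IsClosed {x : X | 0 ∈ A x} ∧ Convex ℝ {x : X | 0 ∈ A x} := by
  have key : {x : X | 0 ∈ A x} =
      ⋂ (y : X), ⋂ (v : X), ⋂ (_ : v ∈ A y), {x : X | ρ * ‖v‖ ^ 2 ≤ ⟪y - x, v⟫} := by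
    ext x
    simp only [Set.mem_setOf_eq, Set.mem_iInter]
    constructor
    · intro hx y v hv
      have h := hA.1 hx hv
      have hsub : x - y = -(y - x) := by abel
      rw [zero_sub, hsub, inner_neg_neg] at h
      simpa using h
    · intro hx
      set B : X → Set X := fun y => A y ∪ {z | y = x ∧ z = 0} with hB
      have hBco : Comonotone ρ B := by
        rintro p u q v (hu | ⟨rfl, rfl⟩) (hv | ⟨rfl, rfl⟩)
        · exact hA.1 hu hv
        · have h := hx p u hu
          simpa using h
        · have h := hx q v hv
          have hsub : ⟪p - q, (0 : X) - v⟫ = ⟪q - p, v⟫ := by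
            rw [zero_sub, show p - q = -(q - p) by abel, inner_neg_neg]
          rw [hsub]
          simpa using h
        · simp
      have hmax := hA.2 B hBco (fun y => Set.subset_union_left) x
      exact hmax (Or.inr ⟨rfl, rfl⟩)
  rw [key]
  constructor
  · refine isClosed_iInter fun y => isClosed_iInter fun v => isClosed_iInter fun hv => ?_
    exact isClosed_le continuous_const
      ((continuous_const.sub continuous_id).inner continuous_const)
  · refine convex_iInter fun y => convex_iInter fun v => convex_iInter fun hv => ?_
    intro x₁ h₁ x₂ h₂ a b ha hb hab
    simp only [Set.mem_setOf_eq] at h₁ h₂ ⊢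
    have expand : ⟪y - (a • x₁ + b • x₂), v⟫ = a * ⟪y - x₁, v⟫ + b * ⟪y - x₂, v⟫ := by
      simp only [inner_sub_left, inner_add_left, real_inner_smul_left]
      linear_combination (-(⟪y, v⟫ : ℝ)) * hab
    calc ρ * ‖v‖ ^ 2 = a * (ρ * ‖v‖ ^ 2) + b * (ρ * ‖v‖ ^ 2) := by
          rw [← add_mul, hab, one_mul]
      _ ≤ a * ⟪y - x₁, v⟫ + b * ⟪y - x₂, v⟫ :=
          add_le_add (mul_le_mul_of_nonneg_left h₁ ha) (mul_le_mul_of_nonneg_left h₂ hb)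
      _ = ⟪y - (a • x₁ + b • x₂), v⟫ := expand.symm
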